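/- Let Λ = Λ(k[h], σ, a) be a generalized Weyl algebra over a field k of characteristic zero, with σ an automorphism of k[h] and a ∈ k[h] nonzero. Write a = p·b with p a prime (irreducible) factor of a. Then, inside Λ, the intersection of left ideals Λx ∩ Λp equals I(x,b)·p, where I(x,b) = Λx + Λb. -/

import Mathlib

open Polynomial

/-- Generators: `ι 0 = y`, `ι 1 = h`, `ι 2 = x`. Defining relations of the
generalized Weyl algebra `Λ(k[h], σ, a)`, where the automorphism `σ` of `k[h]`
is determined by `s = σ(h)` (so `σ(f) = f ∘ s`):
`xh = σ(h)x`, `hy = yσ(h)`, `yx = a(h)`, `xy = σ(a)(h)`. -/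
inductive gwaRelS (k : Type*) [CommRing k] (s a : Polynomial k) :
    FreeAlgebra k (Fin 3) → FreeAlgebra k (Fin 3) → Prop
  | xh : gwaRelS k s a (FreeAlgebra.ι k 2 * FreeAlgebra.ι k 1)
      (Polynomial.aeval (FreeAlgebra.ι k 1) s * FreeAlgebra.ι k 2)
  | hy : gwaRelS k s a (FreeAlgebra.ι k 1 * FreeAlgebra.ι k 0)
      (FreeAlgebra.ι k 0 * Polynomial.aeval (FreeAlgebra.ι k 1) s)
  | yx : gwaRelS k s a (FreeAlgebra.ι k 0 * FreeAlgebra.ι k 2)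
      (Polynomial.aeval (FreeAlgebra.ι k 1) a)
  | xy : gwaRelS k s a (FreeAlgebra.ι k 2 * FreeAlgebra.ι k 0)
      (Polynomial.aeval (FreeAlgebra.ι k 1) (a.comp s))

/-- The generalized Weyl algebra `Λ(k[h], σ, a)` with `σ(h) = s`. -/
abbrev GWAS (k : Type*) [CommRing k] (s a : Polynomial k) :=
  RingQuot (gwaRelS k s a)

/-- `y ∈ Λ`. -/
noncomputable def GWAS.y (k : Type*) [CommRing k] (s a : Polynomial k) :
    GWAS k s a :=
  RingQuot.mkAlgHom k (gwaRelS k s a) (FreeAlgebra.ι k 0)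

/-- `h ∈ Λ`. -/
noncomputable def GWAS.h (k : Type*) [CommRing k] (s a : Polynomial k) :
    GWAS k s a :=
  RingQuot.mkAlgHom k (gwaRelS k s a) (FreeAlgebra.ι k 1)

/-- `x ∈ Λ`. -/
noncomputable def GWAS.x (k : Type*) [CommRing k] (s a : Polynomial k) :
    GWAS k s a :=
  RingQuot.mkAlgHom k (gwaRelS k s a) (FreeAlgebra.ι k 2)

namespace GWAproof
variable {k : Type*} [Field k]

theorem lin_comp1 (c d : k) (hc : c ≠ 0) :
    aeval (C c⁻¹ * X - C (c⁻¹ * d)) (C c * X + C d) = X := by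
  have e2 : C c * C c⁻¹ = (1 : k[X]) := by rw [← C_mul, mul_inv_cancel₀ hc, C_1]
  simp only [map_add, map_mul, aeval_C, aeval_X, algebraMap_eq]
  rw [mul_sub, ← mul_assoc, e2, ← mul_assoc, e2]
  ring

theorem lin_comp2 (c d : k) (hc : c ≠ 0) :
    aeval (C c * X + C d) (C c⁻¹ * X - C (c⁻¹ * d)) = X := by
  have e2 : C c⁻¹ * C c = (1 : k[X]) := by rw [← C_mul, inv_mul_cancel₀ hc, C_1]
  simp only [map_sub, map_mul, aeval_C, aeval_X, algebraMap_eq]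
  rw [mul_add, ← mul_assoc, e2]
  ring

theorem coeff1_ne_zero {s : k[X]} (hs : s.degree = 1) : s.coeff 1 ≠ 0 := by
  have h1 : s.natDegree = 1 := natDegree_eq_of_degree_eq_some hs
  have hne : s ≠ 0 := fun h => by simp [h] at hs
  have := Polynomial.leadingCoeff_ne_zero.mpr hne
  rwa [Polynomial.leadingCoeff, h1] at this

theorem s_eq {s : k[X]} (hs : s.degree = 1) : s = C (s.coeff 1) * X + C (s.coeff 0) :=
  eq_X_add_C_of_degree_le_one hs.le

/-- The automorphism σ of k[X] with σ(X) = s. -/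
noncomputable def gs {s : k[X]} (hs : s.degree = 1) : k[X] ≃ₐ[k] k[X] :=
  AlgEquiv.ofAlgHom (aeval s) (aeval (C (s.coeff 1)⁻¹ * X - C ((s.coeff 1)⁻¹ * s.coeff 0)))
    (Polynomial.algHom_ext (by
      simp only [AlgHom.comp_apply, aeval_X, AlgHom.id_apply]
      have h := s_eq hs; have hc := coeff1_ne_zero hs
      generalize hC : s.coeff 1 = c at h hc ⊢
      generalize hD : s.coeff 0 = d at h ⊢
      rw [h]; exact lin_comp2 c d hc))
    (Polynomial.algHom_ext (by
      simp only [AlgHom.comp_apply, aeval_X, AlgHom.id_apply]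
      have h := s_eq hs; have hc := coeff1_ne_zero hs
      generalize hC : s.coeff 1 = c at h hc ⊢
      generalize hD : s.coeff 0 = d at h ⊢
      rw [h]; exact lin_comp1 c d hc))

@[simp] theorem gs_apply {s : k[X]} (hs : s.degree = 1) (f : k[X]) : gs hs f = aeval s f := rfl

@[simp] theorem gs_X {s : k[X]} (hs : s.degree = 1) : gs hs X = s := by simp

theorem gs_symm_s {s : k[X]} (hs : s.degree = 1) : (gs hs).symm s = X := by
  rw [AlgEquiv.symm_apply_eq]; simp

section M
variable {s : k[X]} (hs : s.degree = 1) (a : k[X])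

/-- the underlying module of Λ -/
abbrev MM (k : Type*) [Field k] : Type _ := ℤ →₀ k[X]

/-- left action of h -/
noncomputable def Hmap : MM k →ₗ[k] MM k :=
  Finsupp.lsum k fun n => (Finsupp.lsingle n).comp (LinearMap.mulLeft k (X : k[X]))

/-- left action of x -/
noncomputable def Xmap : MM k →ₗ[k] MM k :=
  Finsupp.lsum k fun n => (Finsupp.lsingle (n + 1)).comp
    ((LinearMap.mulLeft k (if n < 0 then gs hs a else 1)).comp (gs hs).toLinearMap)

/-- left action of y -/
noncomputable def Ymap : MM k →ₗ[k] MM k :=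
  Finsupp.lsum k fun n => (Finsupp.lsingle (n - 1)).comp
    ((LinearMap.mulLeft k (if 0 < n then a else 1)).comp (gs hs).symm.toLinearMap)

@[simp] theorem Hmap_single (n : ℤ) (f : k[X]) :
    Hmap (Finsupp.single n f) = Finsupp.single n (X * f) := by
  simp only [Hmap, Finsupp.lsum_single, LinearMap.comp_apply, LinearMap.mulLeft_apply,
    Finsupp.lsingle_apply]

@[simp] theorem Xmap_single (n : ℤ) (f : k[X]) :
    Xmap hs a (Finsupp.single n f) =
      Finsupp.single (n + 1) ((if n < 0 then gs hs a else 1) * gs hs f) := by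
  simp only [Xmap, Finsupp.lsum_single, LinearMap.comp_apply, LinearMap.mulLeft_apply,
    Finsupp.lsingle_apply, AlgEquiv.toLinearMap_apply]

@[simp] theorem Ymap_single (n : ℤ) (f : k[X]) :
    Ymap hs a (Finsupp.single n f) =
      Finsupp.single (n - 1) ((if 0 < n then a else 1) * (gs hs).symm f) := by
  simp only [Ymap, Finsupp.lsum_single, LinearMap.comp_apply, LinearMap.mulLeft_apply,
    Finsupp.lsingle_apply, AlgEquiv.toLinearMap_apply]

theorem aevalH_single (g : k[X]) (n : ℤ) (f : k[X]) :
    (aeval (Hmap : Module.End k (MM k)) g) (Finsupp.single n f) = Finsupp.single n (g * f) := by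
  induction g using Polynomial.induction_on generalizing f with
  | C c =>
      simp only [aeval_C, Module.algebraMap_end_apply, Finsupp.smul_single,
        Polynomial.smul_eq_C_mul]
  | add q r hq hr =>
      simp only [map_add, LinearMap.add_apply, hq, hr, add_mul, Finsupp.single_add]
  | monomial m c hm =>
      rw [pow_succ, ← mul_assoc, map_mul, Module.End.mul_apply, aeval_X, Hmap_single, hm]
      congr 1; ring

end M
end GWAproof
namespace GWAproof
variable {k : Type*} [Field k] {s : k[X]} (hs : s.degree = 1) (a : k[X])

noncomputable def rho0 : FreeAlgebra k (Fin 3) →ₐ[k] Module.End k (MM k) :=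
  FreeAlgebra.lift k ![Ymap hs a, Hmap, Xmap hs a]

@[simp] theorem rho0_y : rho0 hs a (FreeAlgebra.ι k 0) = Ymap hs a := by
  simp [rho0]
@[simp] theorem rho0_h : rho0 hs a (FreeAlgebra.ι k 1) = (Hmap : Module.End k (MM k)) := by
  simp [rho0]
@[simp] theorem rho0_x : rho0 hs a (FreeAlgebra.ι k 2) = Xmap hs a := by
  simp [rho0]

theorem rho0_rel : ∀ ⦃u v : FreeAlgebra k (Fin 3)⦄, gwaRelS k s a u v →
    rho0 hs a u = rho0 hs a v := by
  intro u v huv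
  cases huv with
  | xh =>
      simp only [map_mul, ← Polynomial.aeval_algHom_apply, rho0_y, rho0_h, rho0_x]
      refine Finsupp.lhom_ext fun n f => ?_
      simp only [Module.End.mul_apply, Hmap_single, Xmap_single, aevalH_single, map_mul, gs_X]
      congr 1; ring
  | hy =>
      simp only [map_mul, ← Polynomial.aeval_algHom_apply, rho0_y, rho0_h, rho0_x]
      refine Finsupp.lhom_ext fun n f => ?_
      simp only [Module.End.mul_apply, Hmap_single, Ymap_single, aevalH_single, map_mul,
        gs_symm_s hs]
      congr 1; ring
  | yx =>
      simp only [map_mul, ← Polynomial.aeval_algHom_apply, rho0_y, rho0_h, rho0_x]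
      refine Finsupp.lhom_ext fun n f => ?_
      simp only [Module.End.mul_apply, Xmap_single, Ymap_single, aevalH_single,
        add_sub_cancel_right, map_mul, apply_ite, map_one, AlgEquiv.symm_apply_apply]
      congr 1
      split_ifs <;> first | omega | ring1
  | xy =>
      simp only [map_mul, ← Polynomial.aeval_algHom_apply, rho0_y, rho0_h, rho0_x]
      have hcomp : a.comp s = gs hs a := rfl
      refine Finsupp.lhom_ext fun n f => ?_
      simp only [Module.End.mul_apply, Xmap_single, Ymap_single, aevalH_single,
        sub_add_cancel, map_mul, apply_ite, map_one, AlgEquiv.apply_symm_apply, hcomp]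
      congr 1
      split_ifs <;> first | omega | ring1

/-- the representation of Λ on M -/
noncomputable def rho : GWAS k s a →ₐ[k] Module.End k (MM k) :=
  RingQuot.liftAlgHom k ⟨rho0 hs a, rho0_rel hs a⟩

@[simp] theorem rho_y : rho hs a (GWAS.y k s a) = Ymap hs a := by
  rw [GWAS.y, rho, RingQuot.liftAlgHom_mkAlgHom_apply]; simp
@[simp] theorem rho_h : rho hs a (GWAS.h k s a) = (Hmap : Module.End k (MM k)) := by
  rw [GWAS.h, rho, RingQuot.liftAlgHom_mkAlgHom_apply]; simp
@[simp] theorem rho_x : rho hs a (GWAS.x k s a) = Xmap hs a := by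
  rw [GWAS.x, rho, RingQuot.liftAlgHom_mkAlgHom_apply]; simp

end GWAproof
namespace GWAproof
section Lambda
variable {k : Type*} [Field k] {s : k[X]} (hs : s.degree = 1) (a : k[X])

theorem rel_xh : GWAS.x k s a * GWAS.h k s a
    = aeval (GWAS.h k s a) s * GWAS.x k s a := by
  have := RingQuot.mkAlgHom_rel k (gwaRelS.xh (k := k) (s := s) (a := a))
  simpa only [map_mul, ← Polynomial.aeval_algHom_apply, GWAS.x, GWAS.h] using this

theorem rel_hy : GWAS.h k s a * GWAS.y k s a
    = GWAS.y k s a * aeval (GWAS.h k s a) s := by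
  have := RingQuot.mkAlgHom_rel k (gwaRelS.hy (k := k) (s := s) (a := a))
  simpa only [map_mul, ← Polynomial.aeval_algHom_apply, GWAS.y, GWAS.h] using this

theorem rel_yx : GWAS.y k s a * GWAS.x k s a = aeval (GWAS.h k s a) a := by
  have := RingQuot.mkAlgHom_rel k (gwaRelS.yx (k := k) (s := s) (a := a))
  simpa only [map_mul, ← Polynomial.aeval_algHom_apply, GWAS.y, GWAS.h, GWAS.x] using this

theorem rel_xy : GWAS.x k s a * GWAS.y k s a = aeval (GWAS.h k s a) (gs hs a) := by
  have := RingQuot.mkAlgHom_rel k (gwaRelS.xy (k := k) (s := s) (a := a))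
  have hcomp : a.comp s = gs hs a := rfl
  simpa only [map_mul, ← Polynomial.aeval_algHom_apply, GWAS.y, GWAS.h, GWAS.x, hcomp]
    using this

theorem xc1 (g : k[X]) : GWAS.x k s a * aeval (GWAS.h k s a) g
    = aeval (GWAS.h k s a) (gs hs g) * GWAS.x k s a := by
  induction g using Polynomial.induction_on with
  | C c => simp [Algebra.commutes]
  | add p q hp hq => simp only [map_add, mul_add, add_mul, hp, hq]
  | monomial m c hm =>
      have e1 : aeval (GWAS.h k s a) (C c * X ^ (m + 1))
          = aeval (GWAS.h k s a) (C c * X ^ m) * GWAS.h k s a := by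
        rw [pow_succ, ← mul_assoc, map_mul, aeval_X]
      have e2 : gs hs (C c * X ^ (m + 1)) = gs hs (C c * X ^ m) * s := by
        rw [pow_succ, ← mul_assoc, map_mul, gs_X]
      rw [e1, e2, ← mul_assoc, hm, mul_assoc, rel_xh, ← mul_assoc, ← map_mul]

theorem hy_comm (g : k[X]) : aeval (GWAS.h k s a) g * GWAS.y k s a
    = GWAS.y k s a * aeval (GWAS.h k s a) (gs hs g) := by
  induction g using Polynomial.induction_on with
  | C c => simp [Algebra.commutes]
  | add p q hp hq => simp only [map_add, mul_add, add_mul, hp, hq]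
  | monomial m c hm =>
      have e1 : aeval (GWAS.h k s a) (C c * X ^ (m + 1))
          = GWAS.h k s a * aeval (GWAS.h k s a) (C c * X ^ m) := by
        rw [show C c * X ^ (m + 1) = X * (C c * X ^ m) by ring, map_mul, aeval_X]
      have e2 : gs hs (C c * X ^ (m + 1)) = gs hs (C c * X ^ m) * s := by
        rw [pow_succ, ← mul_assoc, map_mul, gs_X]
      rw [e1, e2, mul_assoc, hm, ← mul_assoc, rel_hy, mul_assoc, ← map_mul,
        mul_comm s (gs hs (C c * X ^ m))]

theorem yc1 (g : k[X]) : GWAS.y k s a * aeval (GWAS.h k s a) g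
    = aeval (GWAS.h k s a) ((gs hs).symm g) * GWAS.y k s a := by
  have := hy_comm hs a ((gs hs).symm g)
  rw [AlgEquiv.apply_symm_apply] at this
  rw [this]

theorem xcn (j : ℕ) (g : k[X]) : (GWAS.x k s a) ^ j * aeval (GWAS.h k s a) g
    = aeval (GWAS.h k s a) (((gs hs) ^ j) g) * (GWAS.x k s a) ^ j := by
  induction j generalizing g with
  | zero => simp
  | succ m hm =>
      rw [pow_succ, mul_assoc, xc1 hs a, ← mul_assoc, hm (gs hs g), mul_assoc, ← pow_succ,
        pow_succ (gs hs) m, AlgEquiv.mul_apply]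

theorem ycn (j : ℕ) (g : k[X]) : (GWAS.y k s a) ^ j * aeval (GWAS.h k s a) g
    = aeval (GWAS.h k s a) (((gs hs).symm ^ j) g) * (GWAS.y k s a) ^ j := by
  induction j generalizing g with
  | zero => simp
  | succ m hm =>
      rw [pow_succ, mul_assoc, yc1 hs a, ← mul_assoc, hm ((gs hs).symm g), mul_assoc, ← pow_succ,
        pow_succ (gs hs).symm m, AlgEquiv.mul_apply]

end Lambda
end GWAproof
namespace GWAproof
section Lambda2
variable {k : Type*} [Field k] {s : k[X]} (hs : s.degree = 1) (a : k[X])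

theorem zp_nonneg (e : k[X] ≃ₐ[k] k[X]) {n : ℤ} (hn : 0 ≤ n) : e ^ n = e ^ n.toNat := by
  conv_lhs => rw [← Int.toNat_of_nonneg hn]
  rw [zpow_natCast]

theorem zp_neg (e : k[X] ≃ₐ[k] k[X]) (j : ℕ) : e ^ (-(j : ℤ)) = e.symm ^ j := by
  rw [zpow_neg, zpow_natCast, ← inv_pow]; exact rfl

theorem zp_nonpos (e : k[X] ≃ₐ[k] k[X]) {n : ℤ} (hn : n ≤ 0) : e ^ n = e.symm ^ (-n).toNat := by
  rw [← zp_neg, Int.toNat_of_nonneg (by omega), neg_neg]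

/-- basis elements of Λ -/
noncomputable def vgen (n : ℤ) : GWAS k s a :=
  if 0 ≤ n then GWAS.x k s a ^ n.toNat else GWAS.y k s a ^ (-n).toNat

theorem vgen_nonneg {n : ℤ} (hn : 0 ≤ n) : vgen (s := s) a n = GWAS.x k s a ^ n.toNat :=
  if_pos hn

theorem vgen_nonpos {n : ℤ} (hn : n ≤ 0) : vgen (s := s) a n = GWAS.y k s a ^ (-n).toNat := by
  rcases eq_or_lt_of_le hn with rfl | h
  · simp [vgen]
  · exact if_neg (by omega)

@[simp] theorem vgen_zero : vgen (s := s) a 0 = 1 := by simp [vgen]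

theorem x_mul_vgen (n : ℤ) : GWAS.x k s a * vgen a n
    = aeval (GWAS.h k s a) (if n < 0 then gs hs a else 1) * vgen a (n + 1) := by
  rcases le_or_gt 0 n with h | h
  · rw [if_neg (by omega), vgen_nonneg a h, vgen_nonneg a (by omega), map_one, one_mul,
      show (n + 1).toNat = n.toNat + 1 by omega, pow_succ']
  · rw [if_pos h, vgen_nonpos a (by omega), vgen_nonpos a (by omega)]
    have hm : (-n).toNat = (-(n + 1)).toNat + 1 := by omega
    rw [hm, pow_succ', ← mul_assoc, rel_xy hs a]

theorem y_mul_vgen (n : ℤ) : GWAS.y k s a * vgen a n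
    = aeval (GWAS.h k s a) (if 0 < n then a else 1) * vgen a (n - 1) := by
  rcases le_or_gt n 0 with h | h
  · rw [if_neg (by omega), vgen_nonpos a h, vgen_nonpos a (by omega), map_one, one_mul,
      show (-(n - 1)).toNat = (-n).toNat + 1 by omega, pow_succ']
  · rw [if_pos h, vgen_nonneg a (by omega), vgen_nonneg a (by omega)]
    have hm : n.toNat = (n - 1).toNat + 1 := by omega
    rw [hm, pow_succ', ← mul_assoc, rel_yx]

theorem vgen_mul_x (n : ℤ) : vgen a n * GWAS.x k s a
    = aeval (GWAS.h k s a) (if n + 1 ≤ 0 then ((gs hs) ^ (n + 1)) a else 1) * vgen a (n + 1) := by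
  rcases le_or_gt 0 n with h | h
  · rw [if_neg (by omega), vgen_nonneg a h, vgen_nonneg a (by omega), map_one, one_mul,
      show (n + 1).toNat = n.toNat + 1 by omega, pow_succ]
  · rw [if_pos (by omega), vgen_nonpos a (by omega), vgen_nonpos a (by omega)]
    have hm : (-n).toNat = (-(n + 1)).toNat + 1 := by omega
    rw [hm, pow_succ, mul_assoc, rel_yx, ycn hs a, zp_nonpos (gs hs) (by omega : n + 1 ≤ 0)]

theorem vgen_mul_h (n : ℤ) (g : k[X]) : vgen a n * aeval (GWAS.h k s a) g
    = aeval (GWAS.h k s a) (((gs hs) ^ n) g) * vgen a n := by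
  rcases le_or_gt 0 n with h | h
  · rw [vgen_nonneg a h, xcn hs a, zp_nonneg (gs hs) h]
  · rw [vgen_nonpos a (by omega), ycn hs a, zp_nonpos (gs hs) (by omega)]

/-- the linear isomorphism M → Λ -/
noncomputable def Psi : MM k →ₗ[k] GWAS k s a :=
  Finsupp.lsum k fun n =>
    (LinearMap.mulRight k (vgen (s := s) a n)).comp (aeval (GWAS.h k s a)).toLinearMap

@[simp] theorem Psi_single (n : ℤ) (f : k[X]) :
    Psi a (Finsupp.single n f) = aeval (GWAS.h k s a) f * vgen a n := by
  simp only [Psi, Finsupp.lsum_single, LinearMap.comp_apply, AlgHom.toLinearMap_apply,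
    LinearMap.mulRight_apply]

theorem x_Psi (m : MM k) : GWAS.x k s a * Psi a m = Psi a (Xmap hs a m) := by
  have h : (LinearMap.mulLeft k (GWAS.x k s a)).comp (Psi (s := s) a)
      = (Psi a).comp (Xmap hs a) := by
    refine Finsupp.lhom_ext fun n f => ?_
    simp only [LinearMap.comp_apply, LinearMap.mulLeft_apply, Xmap_single, Psi_single]
    rw [← mul_assoc, xc1 hs a, mul_assoc, x_mul_vgen hs a, ← mul_assoc, ← map_mul,
      mul_comm (gs hs f)]
  exact DFunLike.congr_fun h m

theorem y_Psi (m : MM k) : GWAS.y k s a * Psi a m = Psi a (Ymap hs a m) := by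
  have h : (LinearMap.mulLeft k (GWAS.y k s a)).comp (Psi (s := s) a)
      = (Psi a).comp (Ymap hs a) := by
    refine Finsupp.lhom_ext fun n f => ?_
    simp only [LinearMap.comp_apply, LinearMap.mulLeft_apply, Ymap_single, Psi_single]
    rw [← mul_assoc, yc1 hs a, mul_assoc, y_mul_vgen a, ← mul_assoc, ← map_mul,
      mul_comm ((gs hs).symm f)]
  exact DFunLike.congr_fun h m

theorem h_Psi (m : MM k) : GWAS.h k s a * Psi a m = Psi a (Hmap m) := by
  have h : (LinearMap.mulLeft k (GWAS.h k s a)).comp (Psi (s := s) a)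
      = (Psi a).comp (Hmap : MM k →ₗ[k] MM k) := by
    refine Finsupp.lhom_ext fun n f => ?_
    simp only [LinearMap.comp_apply, LinearMap.mulLeft_apply, Hmap_single, Psi_single]
    rw [← mul_assoc]
    congr 1
    rw [map_mul, aeval_X]
  exact DFunLike.congr_fun h m

theorem equivar (z : GWAS k s a) (m : MM k) : z * Psi a m = Psi a (rho hs a z m) := by
  obtain ⟨w, rfl⟩ := RingQuot.mkAlgHom_surjective k _ z
  induction w using FreeAlgebra.induction generalizing m with
  | grade0 r =>
      rw [AlgHom.commutes, AlgHom.commutes, Module.algebraMap_end_apply, map_smul,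
        ← Algebra.smul_def]
  | grade1 i =>
      fin_cases i
      · show GWAS.y k s a * Psi a m = Psi a (rho hs a (GWAS.y k s a) m)
        rw [rho_y]
        exact y_Psi hs a m
      · show GWAS.h k s a * Psi a m = Psi a (rho hs a (GWAS.h k s a) m)
        rw [rho_h]
        exact h_Psi a m
      · show GWAS.x k s a * Psi a m = Psi a (rho hs a (GWAS.x k s a) m)
        rw [rho_x]
        exact x_Psi hs a m
  | mul u v hu hv =>
      rw [map_mul, mul_assoc, hv m, hu (rho hs a (RingQuot.mkAlgHom k (gwaRelS k s a) v) m),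
        map_mul, Module.End.mul_apply]
  | add u v hu hv =>
      rw [map_add, add_mul, hu m, hv m, map_add, LinearMap.add_apply, map_add]

end Lambda2
end GWAproof
namespace GWAproof
section Lambda3
variable {k : Type*} [Field k] {s : k[X]} (hs : s.degree = 1) (a : k[X])

/-- the coordinate map Λ → M -/
noncomputable def Phi (z : GWAS k s a) : MM k := rho hs a z (Finsupp.single 0 1)

theorem Psi_Phi (z : GWAS k s a) : Psi a (Phi hs a z) = z := by
  have h := equivar hs a z (Finsupp.single 0 1)
  rw [Psi_single, map_one, one_mul, vgen_zero, mul_one] at h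
  exact h.symm

theorem Phi_injective : Function.Injective (Phi hs a) := fun z w h => by
  rw [← Psi_Phi hs a z, ← Psi_Phi hs a w, h]

theorem Xmap_pow_delta (t : ℕ) : ((Xmap hs a) ^ t) (Finsupp.single 0 1)
    = Finsupp.single (t : ℤ) 1 := by
  induction t with
  | zero => simp
  | succ j hj =>
      rw [pow_succ', Module.End.mul_apply, hj, Xmap_single, if_neg (by omega), one_mul, map_one]
      congr 1 <;> omega

theorem Ymap_pow_delta (t : ℕ) : ((Ymap hs a) ^ t) (Finsupp.single 0 1)
    = Finsupp.single (-(t : ℤ)) 1 := by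
  induction t with
  | zero => simp
  | succ j hj =>
      rw [pow_succ', Module.End.mul_apply, hj, Ymap_single, map_one, mul_one,
        if_neg (by omega : ¬(0:ℤ) < -(j:ℤ))]
      congr 1 <;> omega

theorem rho_vgen_delta (n : ℤ) : rho hs a (vgen a n) (Finsupp.single 0 1)
    = Finsupp.single n 1 := by
  rcases le_or_gt 0 n with h | h
  · rw [vgen_nonneg a h, map_pow, rho_x, Xmap_pow_delta hs a]
    congr 1
    omega
  · rw [vgen_nonpos a (by omega), map_pow, rho_y, Ymap_pow_delta hs a]
    congr 1
    omega

theorem Phi_Psi (m : MM k) : Phi hs a (Psi a m) = m := by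
  induction m using Finsupp.induction_linear with
  | zero => simp [Phi]
  | add f g hf hg => rw [map_add, Phi, map_add, LinearMap.add_apply, ← Phi, ← Phi, hf, hg]
  | single n f =>
      rw [Psi_single, Phi, map_mul, Module.End.mul_apply, ← Polynomial.aeval_algHom_apply, rho_h,
        show rho hs a (vgen a n) (Finsupp.single 0 1) = Finsupp.single n 1
          from rho_vgen_delta hs a n,
        aevalH_single, mul_one]

end Lambda3
end GWAproof
namespace GWAproof
section Lambda4
variable {k : Type*} [Field k] {s : k[X]} (hs : s.degree = 1) (a : k[X])

/-- right multiplication by x, in coordinates -/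
noncomputable def Rx : MM k →ₗ[k] MM k :=
  Finsupp.lsum k fun n => (Finsupp.lsingle (n + 1)).comp
    (LinearMap.mulLeft k (if n + 1 ≤ 0 then ((gs hs) ^ (n + 1)) a else 1))

/-- right multiplication by g(h), in coordinates -/
noncomputable def Rh (g : k[X]) : MM k →ₗ[k] MM k :=
  Finsupp.lsum k fun n => (Finsupp.lsingle n).comp (LinearMap.mulLeft k (((gs hs) ^ n) g))

theorem lsum_comp_apply (F : ℤ → k[X] →ₗ[k] k[X]) (e : ℤ ≃ ℤ) (m : MM k) (j : ℤ) :
    (Finsupp.lsum k (fun n => (Finsupp.lsingle (e n)).comp (F n)) m) (e j) = F j (m j) := by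
  induction m using Finsupp.induction_linear with
  | zero => simp
  | add f g hf hg => simp only [map_add, Finsupp.add_apply, hf, hg]
  | single i f =>
      rw [Finsupp.lsum_single, LinearMap.comp_apply, Finsupp.lsingle_apply]
      rcases eq_or_ne i j with rfl | hij
      · rw [Finsupp.single_eq_same, Finsupp.single_eq_same]
      · rw [Finsupp.single_eq_of_ne (e.injective.ne hij).symm, Finsupp.single_eq_of_ne hij.symm, map_zero]

theorem Rx_apply (m : MM k) (n : ℤ) :
    Rx hs a m n = (if n ≤ 0 then ((gs hs) ^ n) a else 1) * m (n - 1) := by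
  have h := lsum_comp_apply
    (fun t => LinearMap.mulLeft k (if t + 1 ≤ 0 then ((gs hs) ^ (t + 1)) a else 1))
    (Equiv.addRight 1) m (n - 1)
  simp only [Equiv.coe_addRight, sub_add_cancel, LinearMap.mulLeft_apply] at h
  exact h

theorem Rh_apply (g : k[X]) (m : MM k) (n : ℤ) : Rh hs g m n = ((gs hs) ^ n) g * m n := by
  have h := lsum_comp_apply (fun t => LinearMap.mulLeft k (((gs hs) ^ t) g))
    (Equiv.refl ℤ) m n
  simp only [Equiv.refl_apply, LinearMap.mulLeft_apply] at h
  exact h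

theorem Psi_mul_x (m : MM k) : Psi a m * GWAS.x k s a = Psi a (Rx hs a m) := by
  have h : (LinearMap.mulRight k (GWAS.x k s a)).comp (Psi (s := s) a)
      = (Psi a).comp (Rx hs a) := by
    refine Finsupp.lhom_ext fun n f => ?_
    simp only [LinearMap.comp_apply, LinearMap.mulRight_apply, Rx, Finsupp.lsum_single,
      Finsupp.lsingle_apply, LinearMap.mulLeft_apply, Psi_single]
    rw [mul_assoc, vgen_mul_x hs a, ← mul_assoc, ← map_mul, mul_comm f]
  exact DFunLike.congr_fun h m

theorem Psi_mul_h (g : k[X]) (m : MM k) :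
    Psi a m * aeval (GWAS.h k s a) g = Psi a (Rh hs g m) := by
  have h : (LinearMap.mulRight k (aeval (GWAS.h k s a) g)).comp (Psi (s := s) a)
      = (Psi a).comp (Rh hs g) := by
    refine Finsupp.lhom_ext fun n f => ?_
    simp only [LinearMap.comp_apply, LinearMap.mulRight_apply, Rh, Finsupp.lsum_single,
      Finsupp.lsingle_apply, LinearMap.mulLeft_apply, Psi_single]
    rw [mul_assoc, vgen_mul_h hs a, ← mul_assoc, ← map_mul, mul_comm f]
  exact DFunLike.congr_fun h m

theorem Phi_mul_x (u : GWAS k s a) :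
    Phi hs a (u * GWAS.x k s a) = Rx hs a (Phi hs a u) := by
  conv_lhs => rw [show u = Psi a (Phi hs a u) from (Psi_Phi hs a u).symm]
  rw [Psi_mul_x, Phi_Psi]

theorem Phi_mul_h (u : GWAS k s a) (g : k[X]) :
    Phi hs a (u * aeval (GWAS.h k s a) g) = Rh hs g (Phi hs a u) := by
  conv_lhs => rw [show u = Psi a (Phi hs a u) from (Psi_Phi hs a u).symm]
  rw [Psi_mul_h, Phi_Psi]

theorem gspow_ne_zero (n : ℤ) {g : k[X]} (hg : g ≠ 0) : ((gs hs) ^ n) g ≠ 0 := by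
  intro h
  exact hg (((gs hs) ^ n).injective (by rw [h, map_zero]))

theorem mem_x_iff (ha : a ≠ 0) (z : GWAS k s a) :
    (∃ u, z = u * GWAS.x k s a) ↔ ∀ n ≤ 0, ((gs hs) ^ n) a ∣ Phi hs a z n := by
  constructor
  · rintro ⟨u, rfl⟩ n hn
    rw [Phi_mul_x, Rx_apply, if_pos hn]
    exact dvd_mul_right _ _
  · intro hdvd
    set m := Phi hs a z with hm
    set q : ℤ → k[X] := fun j => if j + 1 ≤ 0 then m (j + 1) / ((gs hs) ^ (j + 1)) a
      else m (j + 1) with hq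
    have hsupp : ∀ j, q j ≠ 0 → j ∈ m.support.image (· - 1) := by
      intro j hj
      have : m (j + 1) ≠ 0 := by
        intro h0
        apply hj
        simp only [hq, h0, EuclideanDomain.zero_div, ite_self]
      refine Finset.mem_image.2 ⟨j + 1, Finsupp.mem_support_iff.2 this, by ring⟩
    set m' : MM k := Finsupp.onFinset _ q hsupp with hm'
    refine ⟨Psi a m', Phi_injective hs a ?_⟩
    rw [Phi_mul_x, Phi_Psi]
    ext n
    rw [Rx_apply]
    have hmn : m' (n - 1) = q (n - 1) := rfl
    rw [hmn, hq]
    simp only [sub_add_cancel]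
    rcases le_or_gt n 0 with h | h
    · rw [if_pos h, if_pos h, EuclideanDomain.mul_div_cancel' (gspow_ne_zero hs n ha)
        (hdvd n h)]
    · rw [if_neg (by omega), if_neg (by omega), one_mul]

theorem mem_h_iff (g : k[X]) (hg : g ≠ 0) (z : GWAS k s a) :
    (∃ u, z = u * aeval (GWAS.h k s a) g) ↔ ∀ n, ((gs hs) ^ n) g ∣ Phi hs a z n := by
  constructor
  · rintro ⟨u, rfl⟩ n
    rw [Phi_mul_h, Rh_apply]
    exact dvd_mul_right _ _
  · intro hdvd
    set m := Phi hs a z with hm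
    set q : ℤ → k[X] := fun j => m j / ((gs hs) ^ j) g with hq
    have hsupp : ∀ j, q j ≠ 0 → j ∈ m.support := by
      intro j hj
      have : m j ≠ 0 := by
        intro h0
        apply hj
        simp only [hq, h0, EuclideanDomain.zero_div]
      exact Finsupp.mem_support_iff.2 this
    set m' : MM k := Finsupp.onFinset _ q hsupp with hm'
    refine ⟨Psi a m', Phi_injective hs a ?_⟩
    rw [Phi_mul_h, Phi_Psi]
    ext n
    rw [Rh_apply]
    have hmn : m' n = q n := rfl
    rw [hmn, hq, EuclideanDomain.mul_div_cancel' (gspow_ne_zero hs n hg) (hdvd n)]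

theorem Phi_add (z w : GWAS k s a) :
    Phi hs a (z + w) = Phi hs a z + Phi hs a w := by
  rw [Phi, map_add, LinearMap.add_apply]; rfl

theorem mem_I_iff (b : k[X]) (hb : b ≠ 0) (hba : b ∣ a) (w : GWAS k s a) :
    (∃ u v, w = u * GWAS.x k s a + v * aeval (GWAS.h k s a) b) ↔
      ∀ n ≤ 0, ((gs hs) ^ n) b ∣ Phi hs a w n := by
  constructor
  · rintro ⟨u, v, rfl⟩ n hn
    rw [Phi_add, Phi_mul_x, Phi_mul_h, Finsupp.add_apply, Rx_apply, Rh_apply, if_pos hn]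
    exact dvd_add ((map_dvd ((gs hs) ^ n) hba).mul_right _) (dvd_mul_right _ _)
  · intro hdvd
    set m := Phi hs a w with hm
    have hsuppu : ∀ j : ℤ, (if 0 ≤ j then m (j + 1) else 0) ≠ 0 →
        j ∈ m.support.image (· - 1) := by
      intro j hj
      have h1 : m (j + 1) ≠ 0 := by
        intro h0
        exact hj (by simp only [h0, ite_self])
      exact Finset.mem_image.2 ⟨j + 1, Finsupp.mem_support_iff.2 h1, by ring⟩
    have hsuppv : ∀ n : ℤ, (if n ≤ 0 then m n / ((gs hs) ^ n) b else 0) ≠ 0 →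
        n ∈ m.support := by
      intro n hn
      have h1 : m n ≠ 0 := by
        intro h0
        exact hn (by simp only [h0, EuclideanDomain.zero_div, ite_self])
      exact Finsupp.mem_support_iff.2 h1
    set mu : MM k := Finsupp.onFinset _ _ hsuppu with hmu
    set mv : MM k := Finsupp.onFinset _ _ hsuppv with hmv
    refine ⟨Psi a mu, Psi a mv, Phi_injective hs a ?_⟩
    rw [Phi_add, Phi_mul_x, Phi_mul_h, Phi_Psi, Phi_Psi, ← hm]
    ext n
    rw [Finsupp.add_apply, Rx_apply, Rh_apply]
    have hun : mu (n - 1) = (if 0 ≤ n - 1 then m n else 0) := by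
      rw [hmu, Finsupp.onFinset_apply]
      rcases le_or_gt 0 (n - 1) with h | h
      · rw [if_pos h, if_pos h, sub_add_cancel]
      · rw [if_neg (by omega), if_neg (by omega)]
    have hvn : mv n = (if n ≤ 0 then m n / ((gs hs) ^ n) b else 0) := rfl
    rw [hun, hvn]
    rcases le_or_gt n 0 with h | h
    · rw [if_pos h, if_pos h, if_neg (by omega), mul_zero, zero_add,
        EuclideanDomain.mul_div_cancel' (gspow_ne_zero hs n hb) (hdvd n h)]
    · rw [if_neg (show ¬n ≤ 0 by omega), if_pos (show (0:ℤ) ≤ n - 1 by omega),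
        if_neg (show ¬n ≤ 0 by omega), one_mul, mul_zero, add_zero]

end Lambda4
end GWAproof

open GWAproof

/-- In a generalized Weyl algebra `Λ = Λ(k[h], σ, a)` (with `σ` the
automorphism of `k[h]` sending `h` to the degree-one polynomial `s`), if
`a = p·b` with `p` irreducible, then `Λx ∩ Λp = I(x,b)·p`, where
`I(x,b) = Λx + Λb`. -/
theorem gwa_ideal_intersection (k : Type*) [Field k] [CharZero k]
    (s : k[X]) (hs : s.degree = 1) (a : k[X]) (ha : a ≠ 0)
    (p b : k[X]) (hp : Irreducible p) (hab : a = p * b) :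
    {z : GWAS k s a | ∃ u, z = u * GWAS.x k s a} ∩
        {z : GWAS k s a | ∃ u, z = u * aeval (GWAS.h k s a) p} =
      {z : GWAS k s a | ∃ w,
        (∃ u v, w = u * GWAS.x k s a + v * aeval (GWAS.h k s a) b) ∧
        z = w * aeval (GWAS.h k s a) p} := by
  have hb0 : b ≠ 0 := fun h => ha (by rw [hab, h, mul_zero])
  have hp0 : p ≠ 0 := hp.ne_zero
  have hba : b ∣ a := ⟨p, by rw [hab]; ring⟩
  ext z
  simp only [Set.mem_inter_iff, Set.mem_setOf_eq]
  constructor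
  · rintro ⟨hx, hpmem⟩
    have hA := (mem_x_iff hs a ha z).1 hx
    obtain ⟨w, rfl⟩ := hpmem
    refine ⟨w, ?_, rfl⟩
    refine (mem_I_iff hs a b hb0 hba w).2 ?_
    intro n hn
    have hcomp : Phi hs a (w * aeval (GWAS.h k s a) p) n
        = ((gs hs) ^ n) p * Phi hs a w n := by
      rw [Phi_mul_h, Rh_apply]
    have hAn := hA n hn
    rw [hcomp] at hAn
    have h2 : ((gs hs) ^ n) p * ((gs hs) ^ n) b ∣ ((gs hs) ^ n) p * Phi hs a w n := by
      rw [← map_mul, ← hab]; exact hAn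
    exact (mul_dvd_mul_iff_left (gspow_ne_zero hs n hp0)).1 h2
  · rintro ⟨w, ⟨u, v, rfl⟩, rfl⟩
    refine ⟨⟨u * aeval (GWAS.h k s a) (gs hs p) + v * GWAS.y k s a, ?_⟩,
      ⟨u * GWAS.x k s a + v * aeval (GWAS.h k s a) b, rfl⟩⟩
    rw [add_mul, add_mul, mul_assoc, mul_assoc, mul_assoc, mul_assoc, xc1 hs a p, ← map_mul,
      show b * p = a by rw [hab]; ring, ← rel_yx a]
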